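/- arXiv:2105.02429 — 2 statements merged into one kernel-verified Lean document; each statement's English description precedes it below -/
import Mathlib

section
/- Let P be a finite poset on {1,...,n} and L = g(P) the associated Lie poset algebra. Let x = Σ_{i≠1} i·(E_{1,1} − E_{i,i}). Then for every strict relation p ≺ q of P, the matrix unit E_{p,q} lies in the image of ad_x : L → L; consequently rank(ad_x) ≥ |Rel(P)|. -/
/-- The matrix unit `E p q`. -/
noncomputable def matE {n : ℕ} (p q : Fin n) : Matrix (Fin n) (Fin n) ℂ :=
  Matrix.single p q 1

attribute [local instance 100] LieRing.ofAssociativeRing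

lemma bracket_diag {n : ℕ} (a p q : Fin n) :
    ⁅matE a a, matE p q⁆ =
      ((if a = p then (1:ℂ) else 0) - if a = q then 1 else 0) • matE p q := by
  rw [Ring.lie_def]
  rcases eq_or_ne a p with rfl | hp
  · rcases eq_or_ne a q with rfl | hq
    · simp [matE, Matrix.single_mul_single_same]
    · simp [matE, Matrix.single_mul_single_same, Matrix.single_mul_single_of_ne, hq, hq.symm]
  · rcases eq_or_ne a q with rfl | hq
    · simp [matE, Matrix.single_mul_single_same, Matrix.single_mul_single_of_ne, hp, hp.symm]
    · simp [matE, Matrix.single_mul_single_of_ne, hp, hq, hp.symm, hq.symm]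

lemma ad_sum {n : ℕ} [NeZero n] (p q : Fin n) :
    ⁅∑ i ∈ Finset.univ.erase (0 : Fin n), (((i : ℕ) : ℂ) + 1) • (matE 0 0 - matE i i),
      matE p q⁆ =
    (∑ i ∈ Finset.univ.erase (0 : Fin n), (((i : ℕ) : ℂ) + 1) *
        (((if (0 : Fin n) = p then (1:ℂ) else 0) - if (0 : Fin n) = q then 1 else 0)
          - ((if i = p then (1:ℂ) else 0) - if i = q then 1 else 0))) • matE p q := by
  rw [Ring.lie_def, Finset.sum_mul, Finset.mul_sum, ← Finset.sum_sub_distrib, Finset.sum_smul]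
  refine Finset.sum_congr rfl fun i _ => ?_
  rw [← Ring.lie_def, smul_lie, sub_lie, bracket_diag, bracket_diag, ← sub_smul, smul_smul]

/-- Let `P` be a poset on `{1,…,n}` (realized on `Fin n`, where index `i` carries the
label `i+1`, strict relations being compatible with the natural order), `L = g(P)`,
and `x = Σ_{i ≠ 1} i·(E₁₁ − E_{ii})`.  Then for every strict relation `p ≺ q`,
`E p q` lies in the image of `ad_x : L → L`; consequently `rank(ad_x) ≥ |Rel(P)|`. -/
theorem lie_poset_breadth_element (n : ℕ) [NeZero n]
    (le : Fin n → Fin n → Prop)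
    (hrefl : ∀ p, le p p)
    (hantisymm : ∀ p q, le p q → le q p → p = q)
    (htrans : ∀ p q r, le p q → le q r → le p r)
    (hcompat : ∀ p q, le p q → p ≤ q) :
    let L : Submodule ℂ (Matrix (Fin n) (Fin n) ℂ) :=
      Submodule.span ℂ {m : Matrix (Fin n) (Fin n) ℂ | ∃ p q : Fin n, le p q ∧ m = matE p q}
    let x : Matrix (Fin n) (Fin n) ℂ :=
      ∑ i ∈ Finset.univ.erase (0 : Fin n), (((i : ℕ) : ℂ) + 1) • (matE 0 0 - matE i i)
    (∀ p q : Fin n, le p q → p ≠ q →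
        matE p q ∈ Submodule.map (LieAlgebra.ad ℂ (Matrix (Fin n) (Fin n) ℂ) x) L) ∧
      Set.ncard {pq : Fin n × Fin n | le pq.1 pq.2 ∧ pq.1 ≠ pq.2} ≤
        Module.finrank ℂ
          ↥(Submodule.map (LieAlgebra.ad ℂ (Matrix (Fin n) (Fin n) ℂ) x) L) := by
  intro L x
  classical
  have key : ∀ p q : Fin n, le p q → p ≠ q →
      matE p q ∈ Submodule.map (LieAlgebra.ad ℂ (Matrix (Fin n) (Fin n) ℂ) x) L := by
    intro p q hle hne
    have hpqf : p < q := lt_of_le_of_ne (hcompat p q hle) hne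
    have hpq : (p : ℕ) < (q : ℕ) := hpqf
    have hq0 : q ≠ 0 := by
      intro h; subst h; simp at hpq
    set c : ℂ := ∑ i ∈ Finset.univ.erase (0 : Fin n), (((i : ℕ) : ℂ) + 1) *
        (((if (0 : Fin n) = p then (1:ℂ) else 0) - if (0 : Fin n) = q then 1 else 0)
          - ((if i = p then (1:ℂ) else 0) - if i = q then 1 else 0)) with hc
    have hx : ⁅x, matE p q⁆ = c • matE p q := ad_sum p q
    have hc0 : c ≠ 0 := by
      rcases eq_or_ne p 0 with rfl | hp0
      · have hcv : c = (((∑ i ∈ Finset.univ.erase (0 : Fin n), ((i : ℕ) + 1)) +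
            ((q : ℕ) + 1) : ℕ) : ℂ) := by
          rw [hc]
          have step : ∀ i ∈ Finset.univ.erase (0 : Fin n),
              (((i : ℕ) : ℂ) + 1) *
                (((if (0 : Fin n) = 0 then (1:ℂ) else 0) - if (0 : Fin n) = q then 1 else 0)
                  - ((if i = 0 then (1:ℂ) else 0) - if i = q then 1 else 0)) =
              (((i : ℕ) : ℂ) + 1) + (if i = q then ((i : ℕ) : ℂ) + 1 else 0) := by
            intro i hi
            have hi0 : i ≠ 0 := (Finset.mem_erase.mp hi).1
            simp only [if_pos rfl, if_neg (Ne.symm hq0), if_neg hi0]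
            split_ifs <;> ring
          rw [Finset.sum_congr rfl step, Finset.sum_add_distrib, Finset.sum_ite_eq']
          simp [hq0]
        rw [hcv]
        exact Nat.cast_ne_zero.mpr (by omega)
      · have hcv : c = (((q : ℕ) : ℂ) + 1) - (((p : ℕ) : ℂ) + 1) := by
          rw [hc]
          have step : ∀ i ∈ Finset.univ.erase (0 : Fin n),
              (((i : ℕ) : ℂ) + 1) *
                (((if (0 : Fin n) = p then (1:ℂ) else 0) - if (0 : Fin n) = q then 1 else 0)
                  - ((if i = p then (1:ℂ) else 0) - if i = q then 1 else 0)) =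
              (if i = q then ((i : ℕ) : ℂ) + 1 else 0) -
                (if i = p then ((i : ℕ) : ℂ) + 1 else 0) := by
            intro i hi
            simp only [if_neg (Ne.symm hp0), if_neg (Ne.symm hq0)]
            split_ifs with h1 h2
            · exact absurd (h1 ▸ h2) (by exact fun h => hne (h1.symm ▸ h2 ▸ rfl))
            · ring
            · ring
            · ring
          rw [Finset.sum_congr rfl step, Finset.sum_sub_distrib,
            Finset.sum_ite_eq', Finset.sum_ite_eq']
          simp [hp0, hq0]
        rw [hcv]
        intro h
        have h2 : ((q : ℕ) : ℂ) = ((p : ℕ) : ℂ) := by linear_combination h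
        exact hne (Fin.val_injective (by exact_mod_cast h2)).symm
    refine ⟨c⁻¹ • matE p q, Submodule.smul_mem _ _
      (Submodule.subset_span ⟨p, q, hle, rfl⟩), ?_⟩
    rw [map_smul, LieAlgebra.ad_apply, hx, smul_smul, inv_mul_cancel₀ hc0, one_smul]
  refine ⟨key, ?_⟩
  set W := Submodule.map (LieAlgebra.ad ℂ (Matrix (Fin n) (Fin n) ℂ) x) L with hW
  set S : Set (Fin n × Fin n) := {pq : Fin n × Fin n | le pq.1 pq.2 ∧ pq.1 ≠ pq.2} with hS
  have hli_full : LinearIndependent ℂ (fun pq : Fin n × Fin n => matE pq.1 pq.2) := by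
    have hb := (Matrix.stdBasis ℂ (Fin n) (Fin n)).linearIndependent
    have : (fun pq : Fin n × Fin n => matE pq.1 pq.2) =
        ⇑(Matrix.stdBasis ℂ (Fin n) (Fin n)) := by
      funext pq
      cases pq with
      | mk a b => simp [matE, Matrix.stdBasis_eq_single]
    rw [this]; exact hb
  have hli : LinearIndependent ℂ (fun pq : S => matE pq.1.1 pq.1.2) :=
    hli_full.comp Subtype.val Subtype.val_injective
  let v : S → W := fun pq => ⟨matE pq.1.1 pq.1.2, key pq.1.1 pq.1.2 pq.2.1 pq.2.2⟩
  have hliW : LinearIndependent ℂ v :=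
    LinearIndependent.of_comp W.subtype hli
  rw [Set.ncard_eq_toFinset_card' S, Set.toFinset_card]
  exact hliW.fintype_card_le_finrank
end

section
/- Let P = C_n be the chain on {1,...,n} and L = g^≺(P), the strictly upper triangular n×n matrices. For x = Σ_{i=1}^{n-1} E_{i,i+1}, the image of ad_x contains E_{p,q} for every non-covering relation p ≺ q (i.e., q − p ≥ 2); hence rank(ad_x) ≥ (n−1)(n−2)/2. -/
attribute [local instance 100] LieRing.ofAssociativeRing

open Matrix Finset

lemma matE_mul_matE {n : ℕ} (a b c d : Fin n) :
    matE a b * matE c d = if b = c then matE a d else 0 := by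
  by_cases h : b = c
  · subst h; simp [matE, Matrix.single_mul_single_same]
  · rw [if_neg h]
    simp only [matE]
    simp [Matrix.single_mul_single_of_ne, h]

section
variable (n : ℕ)

noncomputable def xmat : Matrix (Fin n) (Fin n) ℂ :=
  ∑ i : Fin n, if h : (i : ℕ) + 1 < n then matE i ⟨(i : ℕ) + 1, h⟩ else 0

lemma xmat_mul {n : ℕ} (a b : Fin n) :
    xmat n * matE a b =
      if h : 1 ≤ (a : ℕ) then matE ⟨(a : ℕ) - 1, by omega⟩ b else 0 := by
  rw [xmat, Finset.sum_mul]
  by_cases ha : 1 ≤ (a : ℕ)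
  · rw [dif_pos ha]
    rw [Finset.sum_eq_single (⟨(a : ℕ) - 1, by omega⟩ : Fin n)]
    · rw [dif_pos (by simp; omega)]
      rw [matE_mul_matE, if_pos (by ext; simp; omega)]
    · intro i _ hi
      by_cases h : (i : ℕ) + 1 < n
      · rw [dif_pos h, matE_mul_matE, if_neg, ]
        intro hc
        apply hi
        have : (i : ℕ) + 1 = (a : ℕ) := congrArg Fin.val hc
        ext; simp; omega
      · rw [dif_neg h, zero_mul]
    · simp
  · rw [dif_neg ha]
    apply Finset.sum_eq_zero
    intro i _
    by_cases h : (i : ℕ) + 1 < n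
    · rw [dif_pos h, matE_mul_matE, if_neg, ]
      intro hc
      have : (i : ℕ) + 1 = (a : ℕ) := congrArg Fin.val hc
      omega
    · rw [dif_neg h, zero_mul]

lemma mul_xmat {n : ℕ} (a b : Fin n) :
    matE a b * xmat n =
      if h : (b : ℕ) + 1 < n then matE a ⟨(b : ℕ) + 1, h⟩ else 0 := by
  rw [xmat, Finset.mul_sum]
  by_cases hb : (b : ℕ) + 1 < n
  · rw [dif_pos hb]
    rw [Finset.sum_eq_single b]
    · rw [dif_pos hb, matE_mul_matE, if_pos rfl]
    · intro i _ hi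
      by_cases h : (i : ℕ) + 1 < n
      · rw [dif_pos h, matE_mul_matE, if_neg (fun hc => hi hc.symm)]
      · rw [dif_neg h, mul_zero]
    · simp
  · rw [dif_neg hb]
    apply Finset.sum_eq_zero
    intro i _
    by_cases h : (i : ℕ) + 1 < n
    · rw [dif_pos h, matE_mul_matE, if_neg]
      exact fun hc => hb (by rw [hc]; exact h)
    · rw [dif_neg h, mul_zero]

end

lemma matE_congr {n : ℕ} {a b c d : ℕ} (ha : a < n) (hb : b < n) (hc : c < n) (hd : d < n)
    (h1 : a = c) (h2 : b = d) : matE ⟨a, ha⟩ ⟨b, hb⟩ = matE ⟨c, hc⟩ ⟨d, hd⟩ := by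
  subst h1; subst h2; rfl

lemma ad_matE {n : ℕ} (a b : Fin n) :
    LieAlgebra.ad ℂ (Matrix (Fin n) (Fin n) ℂ) (xmat n) (matE a b) =
      (if _ : 1 ≤ (a : ℕ) then matE ⟨(a : ℕ) - 1, by omega⟩ b else 0) -
      (if h : (b : ℕ) + 1 < n then matE a ⟨(b : ℕ) + 1, h⟩ else 0) := by
  rw [LieAlgebra.ad_apply, Ring.lie_def, xmat_mul, mul_xmat]

lemma part1 {n : ℕ} (p q : Fin n) (hpq : (p : ℕ) + 2 ≤ (q : ℕ)) :
    matE p q ∈ Submodule.map (LieAlgebra.ad ℂ (Matrix (Fin n) (Fin n) ℂ) (xmat n))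
      (Submodule.span ℂ
        {m : Matrix (Fin n) (Fin n) ℂ | ∃ p q : Fin n, p < q ∧ m = matE p q}) := by
  have hq : (q : ℕ) < n := q.isLt
  set f : ℕ → Matrix (Fin n) (Fin n) ℂ := fun k =>
    if h : (q : ℕ) + k < n then matE ⟨(p : ℕ) + k, by omega⟩ ⟨(q : ℕ) + k, h⟩ else 0 with hf
  set g : ℕ → Matrix (Fin n) (Fin n) ℂ := fun k =>
    if h : (q : ℕ) + k < n then matE ⟨(p : ℕ) + 1 + k, by omega⟩ ⟨(q : ℕ) + k, h⟩ else 0 with hg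
  refine ⟨∑ k ∈ Finset.range (n - (q : ℕ)), g k, ?_, ?_⟩
  · rw [SetLike.mem_coe]
    apply Submodule.sum_mem
    intro k _
    by_cases h : (q : ℕ) + k < n
    · have : g k = matE ⟨(p : ℕ) + 1 + k, by omega⟩ ⟨(q : ℕ) + k, h⟩ := dif_pos h
      rw [this]
      exact Submodule.subset_span ⟨_, _, by rw [Fin.lt_def]; simp; omega, rfl⟩
    · have : g k = 0 := dif_neg h
      rw [this]; exact Submodule.zero_mem _
  · rw [map_sum]
    have key : ∀ k, LieAlgebra.ad ℂ (Matrix (Fin n) (Fin n) ℂ) (xmat n) (g k)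
        = f k - f (k + 1) := by
      intro k
      by_cases h : (q : ℕ) + k < n
      · have hg1 : g k = matE ⟨(p : ℕ) + 1 + k, by omega⟩ ⟨(q : ℕ) + k, h⟩ := dif_pos h
        have hf1 : f k = matE ⟨(p : ℕ) + k, by omega⟩ ⟨(q : ℕ) + k, h⟩ := dif_pos h
        rw [hg1, ad_matE, hf1]
        rw [dif_pos (show 1 ≤ (((⟨(p : ℕ) + 1 + k, by omega⟩ : Fin n)) : ℕ) by simp; omega)]
        congr 1
        · exact matE_congr _ _ _ _ (by simp) rfl
        · by_cases h2 : (q : ℕ) + k + 1 < n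
          · have hf2 : f (k + 1) = matE ⟨(p : ℕ) + (k + 1), by omega⟩ ⟨(q : ℕ) + (k + 1), by omega⟩ :=
              dif_pos (by omega)
            rw [hf2, dif_pos (show (((⟨(q : ℕ) + k, h⟩ : Fin n)) : ℕ) + 1 < n from h2)]
            exact matE_congr _ _ _ _ (by omega) (by simp only [Fin.val_mk]; omega)
          · have hf2 : f (k + 1) = 0 := dif_neg (by omega)
            rw [hf2, dif_neg (show ¬((((⟨(q : ℕ) + k, h⟩ : Fin n)) : ℕ) + 1 < n) from h2)]
      · have hg0 : g k = 0 := dif_neg h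
        have h1 : f k = 0 := dif_neg h
        have h2 : f (k + 1) = 0 := dif_neg (by omega)
        rw [hg0, map_zero, h1, h2, sub_zero]
    simp only [key]
    rw [Finset.sum_range_sub']
    have hf0 : f 0 = matE ⟨(p : ℕ) + 0, by omega⟩ ⟨(q : ℕ) + 0, by omega⟩ := dif_pos (by omega)
    have hfn : f (n - (q : ℕ)) = 0 := dif_neg (by omega)
    rw [hf0, hfn, sub_zero]
    have : matE (⟨(p : ℕ) + 0, by omega⟩ : Fin n) ⟨(q : ℕ) + 0, by omega⟩ = matE ⟨(p : ℕ), p.isLt⟩ ⟨(q : ℕ), q.isLt⟩ :=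
      matE_congr _ _ _ _ (by omega) (by omega)
    rw [this]

lemma sum_aux (n : ℕ) : 2 * (∑ j ∈ Finset.range n, (j - 1)) = (n - 1) * (n - 2) := by
  induction n with
  | zero => rfl
  | succ m ih =>
    rw [Finset.sum_range_succ, Nat.mul_add, ih]
    rcases m with _ | j
    · rfl
    rcases j with _ | i
    · rfl
    · show (i + 1) * i + 2 * (i + 1) = (i + 2) * (i + 1)
      ring

lemma card_inner {n : ℕ} (q : Fin n) :
    (Finset.univ.filter (fun p : Fin n => (p : ℕ) + 2 ≤ (q : ℕ))).card = (q : ℕ) - 1 := by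
  by_cases hq : 2 ≤ (q : ℕ)
  · have : (Finset.univ.filter (fun p : Fin n => (p : ℕ) + 2 ≤ (q : ℕ)))
        = Finset.Iio (⟨(q : ℕ) - 1, by omega⟩ : Fin n) := by
      ext p
      simp [Fin.lt_def]
      omega
    rw [this, Fin.card_Iio]
  · have : (Finset.univ.filter (fun p : Fin n => (p : ℕ) + 2 ≤ (q : ℕ))) = ∅ := by
      ext p; simp; omega
    rw [this]
    simp
    omega

lemma card_aux (n : ℕ) :
    (Finset.univ.filter (fun z : Fin n × Fin n => (z.1 : ℕ) + 2 ≤ (z.2 : ℕ))).card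
      = ∑ j ∈ Finset.range n, (j - 1) := by
  rw [Finset.card_eq_sum_card_fiberwise
    (f := Prod.snd) (t := Finset.univ) (fun _ _ => Finset.mem_univ _)]
  rw [← Fin.sum_univ_eq_sum_range (fun j => j - 1) n]
  refine Finset.sum_congr rfl fun q _ => ?_
  rw [← card_inner q]
  apply Finset.card_bij (fun z _ => z.1)
  · intro z hz
    simp at hz ⊢
    omega
  · intro z hz w hw hzw
    simp at hz hw
    ext
    · exact congrArg Fin.val hzw
    · rw [hz.2, hw.2]
  · intro p hp
    simp at hp
    exact ⟨(p, q), by simp; omega, rfl⟩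

lemma matE_linearIndependent (n : ℕ) :
    LinearIndependent ℂ (fun ij : Fin n × Fin n => matE ij.1 ij.2) := by
  have he : (fun ij : Fin n × Fin n => matE ij.1 ij.2)
      = ⇑(Matrix.stdBasis ℂ (Fin n) (Fin n)) := by
    funext ij
    cases ij
    simp [matE, Matrix.stdBasis_eq_single]
  rw [he]
  exact (Matrix.stdBasis ℂ (Fin n) (Fin n)).linearIndependent

lemma part2 (n : ℕ) :
    (n - 1) * (n - 2) / 2 ≤
      Module.finrank ℂ
        ↥(Submodule.map (LieAlgebra.ad ℂ (Matrix (Fin n) (Fin n) ℂ) (xmat n))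
          (Submodule.span ℂ
            {m : Matrix (Fin n) (Fin n) ℂ | ∃ p q : Fin n, p < q ∧ m = matE p q})) := by
  set S := Submodule.map (LieAlgebra.ad ℂ (Matrix (Fin n) (Fin n) ℂ) (xmat n))
    (Submodule.span ℂ {m : Matrix (Fin n) (Fin n) ℂ | ∃ p q : Fin n, p < q ∧ m = matE p q})
    with hS
  have hli : LinearIndependent ℂ
      (fun z : {z : Fin n × Fin n // (z.1 : ℕ) + 2 ≤ (z.2 : ℕ)} => matE z.1.1 z.1.2) :=
    (matE_linearIndependent n).comp Subtype.val Subtype.val_injective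
  have hspan : Submodule.span ℂ
      (Set.range (fun z : {z : Fin n × Fin n // (z.1 : ℕ) + 2 ≤ (z.2 : ℕ)} =>
        matE z.1.1 z.1.2)) ≤ S := by
    rw [Submodule.span_le]
    rintro m ⟨z, rfl⟩
    exact part1 z.1.1 z.1.2 z.2
  have h1 := Submodule.finrank_mono hspan
  rw [finrank_span_eq_card hli] at h1
  refine le_trans ?_ h1
  rw [Fintype.card_subtype]
  rw [show (Finset.filter (fun z : Fin n × Fin n => (z.1 : ℕ) + 2 ≤ (z.2 : ℕ)) Finset.univ).card
      = ∑ j ∈ Finset.range n, (j - 1) from card_aux n]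
  have := sum_aux n
  omega

/-- Let `L = g^≺(C_n)` be the strictly upper triangular `n × n` complex matrices and
`x = Σ_{i=1}^{n-1} E_{i,i+1}`.  Then the image of `ad_x : L → L` contains `E p q` for
every non-covering relation `p ≺ q` (i.e. `q − p ≥ 2`); hence
`rank(ad_x) ≥ (n−1)(n−2)/2`. -/
theorem chain_breadth_element (n : ℕ) :
    let L : Submodule ℂ (Matrix (Fin n) (Fin n) ℂ) :=
      Submodule.span ℂ {m : Matrix (Fin n) (Fin n) ℂ | ∃ p q : Fin n, p < q ∧ m = matE p q}
    let x : Matrix (Fin n) (Fin n) ℂ :=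
      ∑ i : Fin n, if h : (i : ℕ) + 1 < n then matE i ⟨(i : ℕ) + 1, h⟩ else 0
    (∀ p q : Fin n, (p : ℕ) + 2 ≤ (q : ℕ) →
        matE p q ∈ Submodule.map (LieAlgebra.ad ℂ (Matrix (Fin n) (Fin n) ℂ) x) L) ∧
      (n - 1) * (n - 2) / 2 ≤
        Module.finrank ℂ
          ↥(Submodule.map (LieAlgebra.ad ℂ (Matrix (Fin n) (Fin n) ℂ) x) L) := by
  intro L x
  have hx : x = xmat n := rfl
  rw [hx]
  exact ⟨fun p q hpq => part1 p q hpq, part2 n⟩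
end
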